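/- Let b̄ > 0 and ν < 0, and define μ⁺(λ) := −b̄/2 + (1/2)√(b̄² − 4ν + 4λ) using the principal square root. Then there exist δ₀ > 0, δ₁ > 0 and M_μ > 0 such that for every λ ∈ ℂ ∖ (−∞,0] with Re λ ≥ −δ₀ − δ₁ |Im λ| and |λ| ≤ M_μ, one has Re μ⁺(λ) > Re √λ, where √λ is the principal square root. -/

import Mathlib

/-- Principal complex square root, via the principal branch of `z ^ (1/2)`. -/
noncomputable def csqrt (z : ℂ) : ℂ := z ^ (1/2 : ℂ)

/-- The negative real axis `(-∞, 0]` inside `ℂ`. -/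
def negRealAxis : Set ℂ := {z : ℂ | z.im = 0 ∧ z.re ≤ 0}

lemma csqrt_sq (z : ℂ) : (csqrt z) ^ 2 = z := by
  have h : (1/2 : ℂ) = ((2:ℕ):ℂ)⁻¹ := by norm_num
  rw [csqrt, h]
  exact Complex.cpow_nat_inv_pow z (by norm_num)

lemma csqrt_re_nonneg (z : ℂ) : 0 ≤ (csqrt z).re := by
  rcases eq_or_ne z 0 with rfl | hz
  · simp [csqrt, Complex.zero_cpow (by norm_num : (1/2:ℂ) ≠ 0)]
  · rw [csqrt, Complex.cpow_def_of_ne_zero hz, Complex.exp_re]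
    apply mul_nonneg (Real.exp_nonneg _)
    apply Real.cos_nonneg_of_mem_Icc
    have h1 := Complex.neg_pi_lt_arg z
    have h2 := Complex.arg_le_pi z
    have him : (Complex.log z * (1/2)).im = z.arg * (1/2) := by
      simp [Complex.mul_im, Complex.log_im]
    rw [him]
    constructor <;> [linarith; linarith]

lemma sqrt_re_le_csqrt_re (z : ℂ) : Real.sqrt z.re ≤ (csqrt z).re := by
  have hs : (csqrt z)^2 = z := csqrt_sq z
  have hre : z.re = (csqrt z).re^2 - (csqrt z).im^2 := by
    have h2 : ((csqrt z)^2).re = z.re := by rw [hs]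
    rw [pow_two, Complex.mul_re] at h2
    rw [← h2]; ring
  have h0 := csqrt_re_nonneg z
  have h1 : z.re ≤ (csqrt z).re^2 := by nlinarith [sq_nonneg (csqrt z).im]
  calc Real.sqrt z.re ≤ Real.sqrt ((csqrt z).re^2) := Real.sqrt_le_sqrt h1
    _ = (csqrt z).re := Real.sqrt_sq h0

lemma csqrt_re_le_sqrt_abs (z : ℂ) : (csqrt z).re ≤ Real.sqrt ‖z‖ := by
  have habs : ‖csqrt z‖^2 = ‖z‖ := by
    rw [← norm_pow, csqrt_sq]
  calc (csqrt z).re ≤ ‖csqrt z‖ := Complex.re_le_norm _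
    _ = Real.sqrt ‖z‖ := by
        rw [← habs, Real.sqrt_sq (norm_nonneg _)]

/-- Near the branch point `λ = 0`, in a small sector, `Re μ⁺(λ) > Re √λ`, where
`μ⁺(λ) = -b̄/2 + (1/2)√(b̄² - 4ν + 4λ)`. -/
theorem mu_plus_dominates_sqrt
    (bbar ν : ℝ) (hbbar : 0 < bbar) (hν : ν < 0) :
    ∃ δ₀ > 0, ∃ δ₁ > 0, ∃ Mμ > 0, ∀ lam : ℂ,
      lam ∉ negRealAxis →
      -δ₀ - δ₁ * |lam.im| ≤ lam.re →
      ‖lam‖ ≤ Mμ →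
      (csqrt lam).re <
        (-(bbar/2 : ℂ) + (1/2 : ℂ) * csqrt ((bbar:ℂ)^2 - 4*(ν:ℂ) + 4*lam)).re := by
  set c : ℝ := bbar^2 - 4*ν with hc
  have hcpos : 0 < c := by nlinarith
  set s : ℝ := Real.sqrt c with hsdef
  have hs2 : s^2 = c := Real.sq_sqrt hcpos.le
  have hsnn : 0 ≤ s := Real.sqrt_nonneg c
  have hsb : bbar < s := by
    have h1 : Real.sqrt (bbar^2) < Real.sqrt c :=
      Real.sqrt_lt_sqrt (by positivity) (by nlinarith)
    rwa [Real.sqrt_sq hbbar.le] at h1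
  set ε : ℝ := (s - bbar)/2 with hεdef
  have hεpos : 0 < ε := by simp only [hεdef]; linarith
  set M : ℝ := min (min (ε*s/8) (ε^2/4)) (c/8) with hMdef
  have hMpos : 0 < M := by
    apply lt_min (lt_min (by positivity) (by positivity)) (by positivity)
  have hM1 : M ≤ ε*s/8 := le_trans (min_le_left _ _) (min_le_left _ _)
  have hM2 : M ≤ ε^2/4 := le_trans (min_le_left _ _) (min_le_right _ _)
  have hM3 : M ≤ c/8 := min_le_right _ _
  refine ⟨1, one_pos, 1, one_pos, M, hMpos, ?_⟩
  intro lam _ _ habs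
  -- Left-hand side bound
  have hL : (csqrt lam).re ≤ ε/2 := by
    have h1 : (csqrt lam).re ≤ Real.sqrt M :=
      (csqrt_re_le_sqrt_abs lam).trans (Real.sqrt_le_sqrt habs)
    have h2 : Real.sqrt M ≤ Real.sqrt (ε^2/4) := Real.sqrt_le_sqrt hM2
    have h3 : Real.sqrt (ε^2/4) = ε/2 := by
      rw [show ε^2/4 = (ε/2)^2 by ring, Real.sqrt_sq (by positivity)]
    linarith
  -- Real part of the shifted argument
  set w : ℂ := (bbar:ℂ)^2 - 4*(ν:ℂ) + 4*lam with hwdef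
  have hwre : w.re = c + 4*lam.re := by
    simp [hwdef, hc, Complex.add_re, Complex.sub_re, Complex.mul_re, pow_two,
      Complex.mul_im]
  have hlamre : -M ≤ lam.re := by
    have := Complex.abs_re_le_norm lam
    have := neg_abs_le lam.re
    linarith
  have hwre_lb : c - 4*M ≤ w.re := by rw [hwre]; linarith
  -- Lower bound for Re √w
  have hkey : (bbar + 3*s)/4 ≤ Real.sqrt w.re := by
    have hq : ((bbar + 3*s)/4)^2 ≤ w.re := by nlinarith
    have := (Real.le_sqrt (by positivity) (le_trans (by positivity) hq)).mpr hq
    exact this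
  have hRw : (bbar + 3*s)/4 ≤ (csqrt w).re :=
    hkey.trans (sqrt_re_le_csqrt_re w)
  -- Compute the real part of the right-hand side
  have hRHS : (-(bbar/2 : ℂ) + (1/2 : ℂ) * csqrt w).re
      = -(bbar/2) + (1/2) * (csqrt w).re := by
    simp [Complex.add_re, Complex.mul_re]
  rw [hRHS]
  have hεs : ε = (s - bbar)/2 := rfl
  nlinarith [hL, hRw, hεpos, hsb]
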